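/- Let Ω be a finite set and 𝒳 a family of subsets of Ω admitting a fractional cover of total weight c*: nonnegative weights (ω_X)_{X∈𝒳} with ∑_{X∋x} ω_X ≥ 1 for every x ∈ Ω and ∑_X ω_X = c*. Then there exists a subfamily of at most ⌈c* · ln|Ω|⌉ + c* sets from 𝒳 whose union is Ω (in particular, the integral cover number is at most O(c* · log|Ω|)). -/

import Mathlib

open Finset

/-- Lovász bound: a fractional cover of total weight c* yields an integral
cover of size at most ⌈c*·ln|Ω|⌉ + c*. -/
theorem stmt_9 {α : Type*} [DecidableEq α] (Ω : Finset α) (𝒳 : Finset (Finset α))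
    (ω : Finset α → ℝ) (cstar : ℝ)
    (hω : ∀ X ∈ 𝒳, 0 ≤ ω X)
    (hcover : ∀ x ∈ Ω, 1 ≤ ∑ X ∈ 𝒳.filter (fun X => x ∈ X), ω X)
    (htotal : ∑ X ∈ 𝒳, ω X = cstar) :
    ∃ F ⊆ 𝒳, (F.card : ℝ) ≤ (⌈cstar * Real.log (Ω.card : ℝ)⌉ : ℝ) + cstar ∧
      ∀ x ∈ Ω, ∃ X ∈ F, x ∈ X := by
  classical
  have hc0 : 0 ≤ cstar := htotal ▸ Finset.sum_nonneg hω
  rcases Ω.eq_empty_or_nonempty with hΩ | hΩ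
  · refine ⟨∅, empty_subset _, ?_, by simp [hΩ]⟩
    simp [hΩ, Real.log_zero, hc0]
  -- Ω nonempty
  have hn1 : 1 ≤ Ω.card := hΩ.card_pos
  have hc1 : 1 ≤ cstar := by
    obtain ⟨x, hx⟩ := hΩ
    calc (1:ℝ) ≤ ∑ X ∈ 𝒳.filter (fun X => x ∈ X), ω X := hcover x hx
    _ ≤ ∑ X ∈ 𝒳, ω X := Finset.sum_le_sum_of_subset_of_nonneg (filter_subset _ _)
        (fun X hX _ => hω X hX)
    _ = cstar := htotal
  have hcpos : (0:ℝ) < cstar := lt_of_lt_of_le one_pos hc1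
  have hfac0 : (0:ℝ) ≤ 1 - 1/cstar := by
    have : 1/cstar ≤ 1 := by
      rw [div_le_one hcpos]; exact hc1
    linarith
  -- greedy step
  have step : ∀ R : Finset α, R ⊆ Ω → R.Nonempty →
      ∃ X ∈ 𝒳, ((R \ X).card : ℝ) ≤ (R.card : ℝ) * (1 - 1/cstar) := by
    intro R hRΩ hR
    -- double counting
    have hdc : (R.card : ℝ) ≤ ∑ X ∈ 𝒳, ω X * ((R ∩ X).card : ℝ) := by
      have h1 : (R.card : ℝ) ≤ ∑ x ∈ R, ∑ X ∈ 𝒳.filter (fun X => x ∈ X), ω X := by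
        calc (R.card : ℝ) = ∑ _x ∈ R, (1:ℝ) := by simp
        _ ≤ _ := Finset.sum_le_sum (fun x hx => hcover x (hRΩ hx))
      have h2 : ∑ x ∈ R, ∑ X ∈ 𝒳.filter (fun X => x ∈ X), ω X
          = ∑ X ∈ 𝒳, ω X * ((R ∩ X).card : ℝ) := by
        have : ∀ x ∈ R, ∑ X ∈ 𝒳.filter (fun X => x ∈ X), ω X
            = ∑ X ∈ 𝒳, if x ∈ X then ω X else 0 := by
          intro x _; rw [Finset.sum_filter]
        rw [Finset.sum_congr rfl this, Finset.sum_comm]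
        refine Finset.sum_congr rfl (fun X _ => ?_)
        rw [Finset.sum_ite, Finset.sum_const_zero, add_zero, Finset.sum_const,
          nsmul_eq_mul, mul_comm]
        have hfi : R.filter (fun y => y ∈ X) = R ∩ X := by
          ext y; simp [Finset.mem_inter, Finset.mem_filter]
        rw [hfi]
      linarith [h2 ▸ h1]
    -- 𝒳 nonempty
    obtain ⟨x, hx⟩ := hR
    have h𝒳 : 𝒳.Nonempty := by
      by_contra h
      rw [Finset.not_nonempty_iff_eq_empty] at h
      have := hcover x (hRΩ hx)
      simp [h] at this; linarith
    obtain ⟨X₀, hX₀, hmax⟩ := Finset.exists_max_image 𝒳 (fun X => (R ∩ X).card) h𝒳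
    have hbound : (R.card : ℝ) ≤ cstar * ((R ∩ X₀).card : ℝ) := by
      calc (R.card : ℝ) ≤ ∑ X ∈ 𝒳, ω X * ((R ∩ X).card : ℝ) := hdc
      _ ≤ ∑ X ∈ 𝒳, ω X * ((R ∩ X₀).card : ℝ) := by
          refine Finset.sum_le_sum (fun X hX => ?_)
          exact mul_le_mul_of_nonneg_left (Nat.cast_le.mpr (hmax X hX)) (hω X hX)
      _ = cstar * ((R ∩ X₀).card : ℝ) := by rw [← Finset.sum_mul, htotal]
    refine ⟨X₀, hX₀, ?_⟩
    have hsdiff : ((R \ X₀).card : ℝ) = (R.card : ℝ) - ((R ∩ X₀).card : ℝ) := by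
      have hnat := Finset.card_sdiff_add_card_inter R X₀
      have : ((R \ X₀).card : ℝ) + ((R ∩ X₀).card : ℝ) = (R.card : ℝ) := by
        exact_mod_cast congrArg (Nat.cast : ℕ → ℝ) hnat
      linarith
    have hdivle : (R.card : ℝ) / cstar ≤ ((R ∩ X₀).card : ℝ) := by
      rw [div_le_iff₀ hcpos, mul_comm]; exact hbound
    have h5 : (R.card : ℝ) * (1 - 1/cstar) = (R.card : ℝ) - (R.card : ℝ)/cstar := by
      field_simp
    rw [hsdiff, h5]
    linarith
  -- main greedy induction
  have main : ∀ t : ℕ, ∃ F ⊆ 𝒳, F.card ≤ t ∧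
      ((Ω.filter (fun x => ∀ X ∈ F, x ∉ X)).card : ℝ)
        ≤ (Ω.card : ℝ) * (1 - 1/cstar)^t := by
    intro t
    induction t with
    | zero => exact ⟨∅, empty_subset _, le_refl _, by simp⟩
    | succ t ih =>
      obtain ⟨F, hF𝒳, hFcard, hFrem⟩ := ih
      set R := Ω.filter (fun x => ∀ X ∈ F, x ∉ X) with hR
      rcases R.eq_empty_or_nonempty with hRe | hRne
      · refine ⟨F, hF𝒳, le_trans hFcard (Nat.le_succ t), ?_⟩
        rw [← hR, hRe]
        simp only [Finset.card_empty, Nat.cast_zero]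
        positivity
      · obtain ⟨X₀, hX₀𝒳, hX₀⟩ := step R (filter_subset _ _) hRne
        refine ⟨insert X₀ F, Finset.insert_subset hX₀𝒳 hF𝒳, ?_, ?_⟩
        · exact le_trans (Finset.card_insert_le _ _) (Nat.succ_le_succ hFcard)
        · have hsub : Ω.filter (fun x => ∀ X ∈ insert X₀ F, x ∉ X) ⊆ R \ X₀ := by
            intro x hx
            simp only [Finset.mem_filter, Finset.mem_insert] at hx
            rw [Finset.mem_sdiff, hR, Finset.mem_filter]
            exact ⟨⟨hx.1, fun X hX => hx.2 X (Or.inr hX)⟩, hx.2 X₀ (Or.inl rfl)⟩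
          calc ((Ω.filter (fun x => ∀ X ∈ insert X₀ F, x ∉ X)).card : ℝ)
              ≤ ((R \ X₀).card : ℝ) := Nat.cast_le.mpr (Finset.card_le_card hsub)
            _ ≤ (R.card : ℝ) * (1 - 1/cstar) := hX₀
            _ ≤ ((Ω.card : ℝ) * (1 - 1/cstar)^t) * (1 - 1/cstar) :=
                mul_le_mul_of_nonneg_right hFrem hfac0
            _ = (Ω.card : ℝ) * (1 - 1/cstar)^(t+1) := by ring
  -- choose t
  set n : ℝ := (Ω.card : ℝ) with hn
  have hnpos : (0:ℝ) < n := by rw [hn]; exact_mod_cast Nat.lt_of_lt_of_le Nat.zero_lt_one hn1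
  have hlog0 : 0 ≤ Real.log n := Real.log_nonneg (by rw [hn]; exact_mod_cast hn1)
  have hcl0 : 0 ≤ cstar * Real.log n := mul_nonneg hc0 hlog0
  set t : ℕ := ⌈cstar * Real.log n⌉.toNat with ht
  have htcast : (t : ℝ) = (⌈cstar * Real.log n⌉ : ℝ) := by
    rw [ht]
    exact_mod_cast Int.toNat_of_nonneg (Int.ceil_nonneg hcl0)
  have htge : cstar * Real.log n ≤ (t : ℝ) := htcast ▸ Int.le_ceil _
  obtain ⟨F, hF𝒳, hFcard, hFrem⟩ := main t
  set R := Ω.filter (fun x => ∀ X ∈ F, x ∉ X) with hRdef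
  -- remaining ≤ 1
  have hexp : (1 - 1/cstar)^t ≤ Real.exp (-(t:ℝ)/cstar) := by
    have h1 : 1 - 1/cstar ≤ Real.exp (-(1/cstar)) := by
      have := Real.add_one_le_exp (-(1/cstar))
      linarith
    calc (1 - 1/cstar)^t ≤ (Real.exp (-(1/cstar)))^t :=
        pow_le_pow_left₀ hfac0 h1 t
      _ = Real.exp (-(t:ℝ)/cstar) := by
          rw [← Real.exp_nat_mul]; ring_nf
  have hrem1 : (R.card : ℝ) ≤ 1 := by
    have h2 : n * (1 - 1/cstar)^t ≤ n * Real.exp (-(t:ℝ)/cstar) :=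
      mul_le_mul_of_nonneg_left hexp (le_of_lt hnpos)
    have h3 : Real.exp (-(t:ℝ)/cstar) ≤ Real.exp (-Real.log n) := by
      apply Real.exp_le_exp.mpr
      rw [div_le_iff₀ hcpos] at *
      nlinarith
    have h4 : n * Real.exp (-Real.log n) = 1 := by
      rw [Real.exp_neg, Real.exp_log hnpos]
      field_simp
    calc (R.card : ℝ) ≤ n * (1 - 1/cstar)^t := hFrem
      _ ≤ n * Real.exp (-(t:ℝ)/cstar) := h2
      _ ≤ n * Real.exp (-Real.log n) := mul_le_mul_of_nonneg_left h3 (le_of_lt hnpos)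
      _ = 1 := h4
  have hRcard : R.card ≤ 1 := by exact_mod_cast hrem1
  rcases R.eq_empty_or_nonempty with hRe | hRne
  · refine ⟨F, hF𝒳, ?_, ?_⟩
    · calc (F.card : ℝ) ≤ (t : ℝ) := by exact_mod_cast hFcard
        _ = (⌈cstar * Real.log n⌉ : ℝ) := htcast
        _ ≤ (⌈cstar * Real.log n⌉ : ℝ) + cstar := by linarith
    · intro x hx
      by_contra h
      push_neg at h
      have : x ∈ R := by
        rw [hRdef, Finset.mem_filter]
        exact ⟨hx, fun X hX => h X hX⟩
      rw [hRe] at this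
      exact absurd this (Finset.notMem_empty x)
  · obtain ⟨x₀, hx₀⟩ := hRne
    have hx₀Ω : x₀ ∈ Ω := (Finset.mem_filter.mp (hRdef ▸ hx₀)).1
    have hfil : (𝒳.filter (fun X => x₀ ∈ X)).Nonempty := by
      by_contra h
      rw [Finset.not_nonempty_iff_eq_empty] at h
      have := hcover x₀ hx₀Ω
      simp [h] at this; linarith
    obtain ⟨X₀, hX₀⟩ := hfil
    rw [Finset.mem_filter] at hX₀
    refine ⟨insert X₀ F, Finset.insert_subset hX₀.1 hF𝒳, ?_, ?_⟩
    · have h1 : ((insert X₀ F).card : ℝ) ≤ (F.card : ℝ) + 1 := by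
        exact_mod_cast Finset.card_insert_le X₀ F
      have h2 : (F.card : ℝ) ≤ (t:ℝ) := by exact_mod_cast hFcard
      linarith [htcast, hc1]
    · intro x hx
      by_cases hxR : x ∈ R
      · have : x = x₀ := Finset.card_le_one.mp hRcard x hxR x₀ hx₀
        exact ⟨X₀, Finset.mem_insert_self _ _, this ▸ hX₀.2⟩
      · rw [hRdef, Finset.mem_filter] at hxR
        push_neg at hxR
        obtain ⟨X, hXF, hxX⟩ := hxR hx
        exact ⟨X, Finset.mem_insert_of_mem hXF, hxX⟩
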